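/- Let G and H be finite mixed graphs. Then G and H are TF-isomorphic if and only if the digraphs ADC(G) and ADC(H) are isomorphic, where ADC(G) is the digraph on vertex set V(G)×{0,1} having an arc from (u,0) to (v,1) for each arc (u,v) of G and no other arcs. -/

import Mathlib

/-- The alternating double cover of a mixed graph `G = (V, A)`, taken on the full
vertex set `V × Bool`: there is an arc from `(u, false)` to `(v, true)` for each arc
`(u, v)` of `G`, and no other arcs. -/
def ADCfull {V : Type*} (A : V → V → Prop) : (V × Bool) → (V × Bool) → Prop :=
  fun p q => p.2 = false ∧ q.2 = true ∧ A p.1 q.1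

/-- Extend an equivalence between subtypes of two finite types of equal cardinality
to an equivalence of the whole types. -/
lemma extend_subtype_equiv {V W : Type*} [Fintype V] [Fintype W]
    (h : Fintype.card V = Fintype.card W) (p : V → Prop) (q : W → Prop)
    (φ : {v // p v} ≃ {w // q w}) :
    ∃ α : V ≃ W, ∀ v (hv : p v), α v = (φ ⟨v, hv⟩ : W) := by
  classical
  have hφ : Fintype.card {v // p v} = Fintype.card {w // q w} := Fintype.card_congr φ
  have hc : Fintype.card {v // ¬ p v} = Fintype.card {w // ¬ q w} := by
    rw [Fintype.card_subtype_compl, Fintype.card_subtype_compl, h, hφ]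
  obtain ⟨ψ⟩ := Fintype.card_eq.mp hc
  refine ⟨(Equiv.sumCompl p).symm.trans ((φ.sumCongr ψ).trans (Equiv.sumCompl q)), ?_⟩
  intro v hv
  simp [Equiv.sumCompl_symm_apply_of_pos (p := p) hv]

/-- finite mixed graphs `G` and `H` are TF-isomorphic iff the digraphs
`ADC(G)` and `ADC(H)` are isomorphic. -/
theorem stmt_14 {V W : Type*} [Fintype V] [Fintype W]
    (A : V → V → Prop) (B : W → W → Prop) :
    (∃ α β : V ≃ W, ∀ u v, A u v ↔ B (α u) (β v)) ↔
    (∃ e : (V × Bool) ≃ (W × Bool), ∀ p q, ADCfull A p q ↔ ADCfull B (e p) (e q)) := by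
  classical
  constructor
  · rintro ⟨α, β, h⟩
    refine ⟨⟨fun p => (cond p.2 (β p.1) (α p.1), p.2),
            fun p => (cond p.2 (β.symm p.1) (α.symm p.1), p.2), ?_, ?_⟩, ?_⟩
    · rintro ⟨v, b⟩; cases b <;> simp
    · rintro ⟨w, b⟩; cases b <;> simp
    · rintro ⟨u, bu⟩ ⟨v, bv⟩
      cases bu <;> cases bv <;> simp [ADCfull, h]
  · rintro ⟨e, he⟩
    have hcard : Fintype.card V = Fintype.card W := by
      have := Fintype.card_congr e
      simp [Fintype.card_prod] at this
      omega
    -- sources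
    set p : V → Prop := fun v => ∃ w, A v w with hp
    set q : W → Prop := fun w => ∃ x, B w x with hq
    -- sinks
    set p' : V → Prop := fun v => ∃ u, A u v with hp'
    set q' : W → Prop := fun w => ∃ u, B u w with hq'
    -- e maps (v, false) with v a source to the false layer
    have hsrc : ∀ v, p v → e (v, false) = ((e (v, false)).1, false) := by
      rintro v ⟨w, hw⟩
      have := (he (v, false) (w, true)).mp ⟨rfl, rfl, hw⟩
      exact Prod.ext rfl this.1
    have hsrcB : ∀ v, p v → q (e (v, false)).1 := by
      rintro v ⟨w, hw⟩
      have := (he (v, false) (w, true)).mp ⟨rfl, rfl, hw⟩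
      exact ⟨(e (w, true)).1, this.2.2⟩
    have hsrc' : ∀ w, q w → e.symm (w, false) = ((e.symm (w, false)).1, false) := by
      rintro w ⟨x, hx⟩
      have := (he (e.symm (w, false)) (e.symm (x, true))).mpr (by simp; exact ⟨rfl, rfl, hx⟩)
      exact Prod.ext rfl this.1
    have hsrcA : ∀ w, q w → p (e.symm (w, false)).1 := by
      rintro w ⟨x, hx⟩
      have := (he (e.symm (w, false)) (e.symm (x, true))).mpr (by simp; exact ⟨rfl, rfl, hx⟩)
      exact ⟨(e.symm (x, true)).1, this.2.2⟩
    -- e maps (v, true) with v a sink to the true layer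
    have hsnk : ∀ v, p' v → e (v, true) = ((e (v, true)).1, true) := by
      rintro v ⟨u, hu⟩
      have := (he (u, false) (v, true)).mp ⟨rfl, rfl, hu⟩
      exact Prod.ext rfl this.2.1
    have hsnkB : ∀ v, p' v → q' (e (v, true)).1 := by
      rintro v ⟨u, hu⟩
      have := (he (u, false) (v, true)).mp ⟨rfl, rfl, hu⟩
      exact ⟨(e (u, false)).1, this.2.2⟩
    have hsnk' : ∀ w, q' w → e.symm (w, true) = ((e.symm (w, true)).1, true) := by
      rintro w ⟨u, hu⟩
      have := (he (e.symm (u, false)) (e.symm (w, true))).mpr (by simp; exact ⟨rfl, rfl, hu⟩)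
      exact Prod.ext rfl this.2.1
    have hsnkA : ∀ w, q' w → p' (e.symm (w, true)).1 := by
      rintro w ⟨u, hu⟩
      have := (he (e.symm (u, false)) (e.symm (w, true))).mpr (by simp; exact ⟨rfl, rfl, hu⟩)
      exact ⟨(e.symm (u, false)).1, this.2.2⟩
    -- the equiv of sources
    let φ : {v // p v} ≃ {w // q w} :=
      { toFun := fun v => ⟨(e (v.1, false)).1, hsrcB v.1 v.2⟩
        invFun := fun w => ⟨(e.symm (w.1, false)).1, hsrcA w.1 w.2⟩
        left_inv := by
          rintro ⟨v, hv⟩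
          ext
          simp only
          rw [← hsrc v hv, Equiv.symm_apply_apply]
        right_inv := by
          rintro ⟨w, hw⟩
          ext
          simp only
          rw [← hsrc' w hw, Equiv.apply_symm_apply] }
    -- the equiv of sinks
    let φ' : {v // p' v} ≃ {w // q' w} :=
      { toFun := fun v => ⟨(e (v.1, true)).1, hsnkB v.1 v.2⟩
        invFun := fun w => ⟨(e.symm (w.1, true)).1, hsnkA w.1 w.2⟩
        left_inv := by
          rintro ⟨v, hv⟩
          ext
          simp only
          rw [← hsnk v hv, Equiv.symm_apply_apply]
        right_inv := by
          rintro ⟨w, hw⟩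
          ext
          simp only
          rw [← hsnk' w hw, Equiv.apply_symm_apply] }
    obtain ⟨α, hα⟩ := extend_subtype_equiv hcard p q φ
    obtain ⟨β, hβ⟩ := extend_subtype_equiv hcard p' q' φ'
    refine ⟨α, β, fun u v => ?_⟩
    constructor
    · intro h
      have hu : p u := ⟨v, h⟩
      have hv : p' v := ⟨u, h⟩
      have h1 : e (u, false) = (α u, false) := by
        rw [hsrc u hu, hα u hu]; rfl
      have h2 : e (v, true) = (β v, true) := by
        rw [hsnk v hv, hβ v hv]; rfl
      have := (he (u, false) (v, true)).mp ⟨rfl, rfl, h⟩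
      rw [h1, h2] at this
      exact this.2.2
    · intro h
      have hqu : q (α u) := ⟨β v, h⟩
      have hqv : q' (β v) := ⟨α u, h⟩
      have hu : p u := by
        have hs := (φ.symm ⟨α u, hqu⟩).2
        have heq : α (φ.symm ⟨α u, hqu⟩).1 = α u := by
          rw [hα _ hs]
          exact congrArg Subtype.val (φ.apply_symm_apply ⟨α u, hqu⟩)
        rw [← α.injective heq]
        exact hs
      have hv : p' v := by
        have hs := (φ'.symm ⟨β v, hqv⟩).2
        have heq : β (φ'.symm ⟨β v, hqv⟩).1 = β v := by
          rw [hβ _ hs]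
          exact congrArg Subtype.val (φ'.apply_symm_apply ⟨β v, hqv⟩)
        rw [← β.injective heq]
        exact hs
      have h1 : e (u, false) = (α u, false) := by
        rw [hsrc u hu, hα u hu]; rfl
      have h2 : e (v, true) = (β v, true) := by
        rw [hsnk v hv, hβ v hv]; rfl
      have := (he (u, false) (v, true)).mpr (by rw [h1, h2]; exact ⟨rfl, rfl, h⟩)
      exact this.2.2
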